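/- Let x₁ ~ N(0,1) and z ~ N(0,1) be independent, θ* ∈ R^d, b₁* and b₂* real numbers with (b₁*)² + (b₂*)² = ‖θ*‖², and let y = x₁ b₁* + z̄ where z̄ ~ N(0, 1 + (b₂*)²). Then for any t > 0, E[x₁² · tanh(t x₁ y)] ≤ E[x₁² · tanh(t x₁² b₁*)], and consequently E[x₁² tanh(t x₁ y)] ≤ t b₁* E[x₁⁴] = 3 t b₁*. -/

import Mathlib

open Real MeasureTheory ProbabilityTheory Set
open scoped NNReal ENNReal

lemma my_tanh_eq_exp (x : ℝ) :
    Real.tanh x = (Real.exp (2*x) - 1) / (Real.exp (2*x) + 1) := by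
  rw [Real.tanh_eq_sinh_div_cosh, Real.sinh_eq, Real.cosh_eq]
  have h1 : (0:ℝ) < Real.exp x := Real.exp_pos x
  have h2 : Real.exp (2*x) = Real.exp x * Real.exp x := by rw [two_mul, Real.exp_add]
  have h3 : Real.exp (-x) = (Real.exp x)⁻¹ := Real.exp_neg x
  rw [h2, h3]
  have h4 : (0:ℝ) < Real.exp x + (Real.exp x)⁻¹ := by positivity
  have h5 : (0:ℝ) < Real.exp x * Real.exp x + 1 := by positivity
  field_simp

lemma my_abs_tanh_le (x : ℝ) : |Real.tanh x| ≤ 1 := by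
  rw [my_tanh_eq_exp]
  have h : (0:ℝ) < Real.exp (2*x) := Real.exp_pos _
  rw [abs_div, abs_of_pos (show (0:ℝ) < Real.exp (2*x) + 1 by linarith),
    div_le_one (by linarith)]
  rw [abs_le]; constructor <;> linarith

lemma my_frac_ineq {P Q R : ℝ} (hP : 0 < P) (hQ : 0 < Q) (hR : 1 ≤ R) (hPQ : P * Q = R^2) :
    (P - 1)/(P + 1) + (Q - 1)/(Q + 1) ≤ 2 * ((R - 1)/(R + 1)) := by
  have hPQ2 : 2 * R ≤ P + Q := by nlinarith [sq_nonneg (P - Q)]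
  rw [div_add_div _ _ (by positivity) (by positivity), mul_div_assoc',
    div_le_div_iff₀ (by positivity) (by positivity)]
  nlinarith [mul_nonneg (by linarith : (0:ℝ) ≤ R - 1) (by linarith : (0:ℝ) ≤ P + Q - 2*R)]

lemma my_tanh_two_sided {a : ℝ} (ha : 0 ≤ a) (u : ℝ) :
    Real.tanh (a + u) + Real.tanh (a - u) ≤ 2 * Real.tanh a := by
  rw [my_tanh_eq_exp (a+u), my_tanh_eq_exp (a-u), my_tanh_eq_exp a]
  refine my_frac_ineq (Real.exp_pos _) (Real.exp_pos _) ?_ ?_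
  · rw [show (1:ℝ) = Real.exp 0 from (Real.exp_zero).symm]
    exact Real.exp_le_exp.mpr (by linarith)
  · rw [← Real.exp_add, sq, ← Real.exp_add]
    ring_nf

lemma my_tanh_le_self {u : ℝ} (hu : 0 ≤ u) : Real.tanh u ≤ u := by
  have key : ∀ x : ℝ, HasDerivAt Real.tanh (1 / Real.cosh x ^ 2) x := by
    intro x
    have h := (Real.hasDerivAt_sinh x).div (Real.hasDerivAt_cosh x) (Real.cosh_pos x).ne'
    have h2 : (fun y => Real.sinh y / Real.cosh y) = Real.tanh := by
      funext y; exact (Real.tanh_eq_sinh_div_cosh y).symm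
    rw [show (Real.sinh / Real.cosh) = (fun y => Real.sinh y / Real.cosh y) from rfl, h2] at h
    refine h.congr_deriv ?_
    have := Real.cosh_sq_sub_sinh_sq x
    rw [div_left_inj' (pow_ne_zero 2 (Real.cosh_pos x).ne')]
    nlinarith
  have hg : Monotone (fun x => x - Real.tanh x) := by
    apply monotone_of_deriv_nonneg
    · exact differentiable_id.sub (fun x => (key x).differentiableAt)
    · intro x
      have hd : HasDerivAt (fun x => x - Real.tanh x) (1 - 1 / Real.cosh x ^ 2) x :=
        (hasDerivAt_id x).sub (key x)
      rw [hd.deriv]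
      have h1 := Real.one_le_cosh x
      have : 1 / Real.cosh x ^ 2 ≤ 1 := by
        rw [div_le_one (by positivity)]; nlinarith
      linarith
  have := hg hu
  simpa [Real.tanh_zero] using this


lemma my_continuous_tanh : Continuous Real.tanh := by
  have h2 : (fun y => Real.sinh y / Real.cosh y) = Real.tanh := by
    funext y; exact (Real.tanh_eq_sinh_div_cosh y).symm
  rw [← h2]
  exact Real.continuous_sinh.div Real.continuous_cosh (fun x => (Real.cosh_pos x).ne')

lemma my_gaussian_map_neg (v : ℝ≥0) :
    (gaussianReal 0 v).map (fun x => -x) = gaussianReal 0 v := by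
  have h := gaussianReal_map_const_mul (μ := 0) (v := v) (-1)
  have h1 : (fun x : ℝ => -1 * x) = (fun x : ℝ => -x) := by funext x; ring
  have h2 : (⟨(-1:ℝ)^2, sq_nonneg _⟩ : ℝ≥0) = 1 := by ext; norm_num
  rw [show ((-1 : ℝ) * ·) = (fun x : ℝ => -x) from h1, mul_zero] at h
  convert h using 2
  ext
  simp

lemma my_integrable_tanh_aff (m : Measure ℝ) [IsProbabilityMeasure m] (a c : ℝ) :
    Integrable (fun z => Real.tanh (a + c * z)) m := by
  refine (integrable_const (1:ℝ)).mono'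
    ((my_continuous_tanh.comp (continuous_const.add (continuous_const.mul continuous_id))).aestronglyMeasurable) ?_
  exact ae_of_all _ fun z => by simpa [Real.norm_eq_abs] using my_abs_tanh_le (a + c * z)

lemma my_cond_bound {v : ℝ≥0} (a c : ℝ) (ha : 0 ≤ a) :
    ∫ z, Real.tanh (a + c * z) ∂(gaussianReal 0 v) ≤ Real.tanh a := by
  have hνeq : gaussianReal 0 v = (gaussianReal 0 v).map (fun x => -x) := (my_gaussian_map_neg v).symm
  have hint : ∀ b : ℝ, Integrable (fun z => Real.tanh (a + b * z)) (gaussianReal 0 v) :=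
    fun b => my_integrable_tanh_aff (gaussianReal 0 v) a b
  have h1 : ∫ z, Real.tanh (a + c * z) ∂(gaussianReal 0 v) = ∫ z, Real.tanh (a - c * z) ∂(gaussianReal 0 v) := by
    conv_lhs => rw [hνeq]
    have hcont : Continuous (fun z : ℝ => Real.tanh (a + c * z)) :=
      my_continuous_tanh.comp (continuous_const.add (continuous_const.mul continuous_id))
    rw [integral_map measurable_neg.aemeasurable hcont.aestronglyMeasurable]
    congr 1; funext z; ring_nf
  have h2 : (2:ℝ) * ∫ z, Real.tanh (a + c * z) ∂(gaussianReal 0 v)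
      = ∫ z, (Real.tanh (a + c * z) + Real.tanh (a - c * z)) ∂(gaussianReal 0 v) := by
    rw [integral_add (hint c) (by simpa [sub_eq_add_neg, neg_mul, ← neg_mul] using hint (-c))]
    rw [← h1]; ring
  have h3 : ∫ z, (Real.tanh (a + c * z) + Real.tanh (a - c * z)) ∂(gaussianReal 0 v)
      ≤ ∫ _z, 2 * Real.tanh a ∂(gaussianReal 0 v) := by
    refine integral_mono ((hint c).add (by simpa [sub_eq_add_neg, ← neg_mul] using hint (-c)))
      (integrable_const _) ?_
    exact fun z => my_tanh_two_sided ha (c * z)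
  rw [integral_const] at h3
  simp only [probReal_univ, one_smul] at h3
  linarith [h2 ▸ h3]


lemma my_pdf_eq (x : ℝ) :
    gaussianPDFReal 0 1 x = (Real.sqrt (2 * π))⁻¹ * Real.exp (-x^2/2) := by
  simp [gaussianPDFReal]

lemma my_density :
    gaussianReal 0 1 = volume.withDensity (fun x => ((gaussianPDFReal 0 1 x).toNNReal : ℝ≥0∞)) := by
  rw [gaussianReal_of_var_ne_zero 0 one_ne_zero]
  rfl

lemma my_integral_gaussian (g : ℝ → ℝ) :
    ∫ x, g x ∂(gaussianReal 0 1) = ∫ x, gaussianPDFReal 0 1 x * g x := by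
  rw [my_density, integral_withDensity_eq_integral_smul
    (measurable_gaussianPDFReal 0 1).real_toNNReal g]
  congr 1; funext x
  rw [NNReal.smul_def, Real.coe_toNNReal _ (gaussianPDFReal_nonneg 0 1 x), smul_eq_mul]

lemma my_integrable_iff (g : ℝ → ℝ) (hg : Measurable g) :
    Integrable g (gaussianReal 0 1) ↔
      Integrable (fun x => g x * gaussianPDFReal 0 1 x) volume := by
  rw [my_density, integrable_withDensity_iff (measurable_gaussianPDFReal 0 1).real_toNNReal.coe_nnreal_ennreal
    (ae_of_all _ fun x => ENNReal.coe_lt_top)]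
  simp only [NNReal.coe_mk, ENNReal.coe_toReal, Real.coe_toNNReal _ (gaussianPDFReal_nonneg 0 1 _)]

lemma my_sq_exp_bound (x : ℝ) :
    x^2 * Real.exp (-x^2/2) ≤ 4 * Real.exp (-(1/4) * x^2) := by
  have hE := Real.add_one_le_exp (x^2/4)
  have hF : (0:ℝ) < Real.exp (-(1/4)*x^2) := Real.exp_pos _
  have hEF : Real.exp (x^2/4) * Real.exp (-(1/4)*x^2) = 1 := by
    rw [← Real.exp_add, show x^2/4 + -(1/4)*x^2 = 0 by ring, Real.exp_zero]
  have h2 : Real.exp (-x^2/2) = Real.exp (-(1/4)*x^2) * Real.exp (-(1/4)*x^2) := by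
    rw [← Real.exp_add]; ring_nf
  rw [h2]
  nlinarith [Real.exp_pos (x^2/4), sq_nonneg x]

lemma my_pow4_exp_bound (x : ℝ) :
    x^4 * Real.exp (-x^2/2) ≤ 64 * Real.exp (-(1/4) * x^2) := by
  have hG := Real.add_one_le_exp (x^2/8)
  have hG0 : (0:ℝ) < Real.exp (x^2/8) := Real.exp_pos _
  have hF : (0:ℝ) < Real.exp (-(1/4)*x^2) := Real.exp_pos _
  have hGF : Real.exp (x^2/8) * Real.exp (x^2/8) * Real.exp (-(1/4)*x^2) = 1 := by
    rw [← Real.exp_add, ← Real.exp_add, show x^2/8 + x^2/8 + -(1/4)*x^2 = 0 by ring, Real.exp_zero]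
  have h2 : Real.exp (-x^2/2) = Real.exp (-(1/4)*x^2) * Real.exp (-(1/4)*x^2) := by
    rw [← Real.exp_add]; ring_nf
  rw [h2]
  have h3 : x^2 ≤ 8 * Real.exp (x^2/8) := by linarith
  have h4 : x^4 ≤ 64 * (Real.exp (x^2/8) * Real.exp (x^2/8)) := by nlinarith [sq_nonneg x]
  have h5 : x^4 * (Real.exp (-(1/4)*x^2) * Real.exp (-(1/4)*x^2))
      ≤ 64 * (Real.exp (x^2/8) * Real.exp (x^2/8)) * (Real.exp (-(1/4)*x^2) * Real.exp (-(1/4)*x^2)) := by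
    nlinarith [mul_pos hF hF]
  have h6 : 64 * (Real.exp (x^2/8) * Real.exp (x^2/8)) * (Real.exp (-(1/4)*x^2) * Real.exp (-(1/4)*x^2))
      = 64 * Real.exp (-(1/4)*x^2) := by
    rw [show 64 * (Real.exp (x^2/8) * Real.exp (x^2/8)) * (Real.exp (-(1/4)*x^2) * Real.exp (-(1/4)*x^2))
      = 64 * ((Real.exp (x^2/8) * Real.exp (x^2/8) * Real.exp (-(1/4)*x^2)) * Real.exp (-(1/4)*x^2)) by ring,
      hGF, one_mul]
  linarith


lemma my_c_pos : (0:ℝ) < (Real.sqrt (2 * π))⁻¹ := by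
  have : (0:ℝ) < Real.sqrt (2*π) := Real.sqrt_pos.mpr (by positivity)
  positivity

lemma my_integrable_pow_gaussian {n : ℕ} (C : ℝ) (hC : 0 ≤ C)
    (hnn : ∀ x : ℝ, 0 ≤ x^n)
    (hbound : ∀ x : ℝ, x^n * Real.exp (-x^2/2) ≤ C * Real.exp (-(1/4) * x^2)) :
    Integrable (fun x : ℝ => x^n) (gaussianReal 0 1) := by
  rw [my_integrable_iff _ (show Measurable (fun x : ℝ => x^n) by fun_prop)]
  set c := (Real.sqrt (2 * π))⁻¹ with hc
  have hc0 : 0 < c := my_c_pos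
  refine ((integrable_exp_neg_mul_sq (by norm_num : (0:ℝ) < 1/4)).const_mul (c * C)).mono'
    ((show Measurable (fun x : ℝ => x^n) by fun_prop).mul (measurable_gaussianPDFReal 0 1)).aestronglyMeasurable
    (ae_of_all _ fun x => ?_)
  rw [Real.norm_eq_abs, my_pdf_eq, ← hc]
  have h1 : |x^n * (c * Real.exp (-x^2/2))| = c * (x^n * Real.exp (-x^2/2)) := by
    rw [abs_of_nonneg (mul_nonneg (hnn x) (by positivity))]
    ring
  rw [h1]
  calc c * (x^n * Real.exp (-x^2/2)) ≤ c * (C * Real.exp (-(1/4) * x^2)) :=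
        mul_le_mul_of_nonneg_left (hbound x) hc0.le
    _ = c * C * Real.exp (-(1/4) * x^2) := by ring

lemma my_Gamma_five_halves : Real.Gamma (5/2) = 3/4 * Real.sqrt π := by
  have h1 : Real.Gamma (3/2 + 1) = 3/2 * Real.Gamma (3/2) := Real.Gamma_add_one (by norm_num)
  have h2 : Real.Gamma (1/2 + 1) = 1/2 * Real.Gamma (1/2) := Real.Gamma_add_one (by norm_num)
  have h3 : Real.Gamma (1/2) = Real.sqrt π := Real.Gamma_one_half_eq
  rw [show (5/2 : ℝ) = 3/2 + 1 by norm_num, h1, show (3/2 : ℝ) = 1/2 + 1 by norm_num, h2, h3]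
  ring

lemma my_Ioi_integral :
    ∫ x in Ioi (0:ℝ), x^(4:ℕ) * Real.exp (-x^2/2) = 3/2 * Real.sqrt (2*π) := by
  have key := integral_rpow_mul_exp_neg_mul_rpow (p := 2) (q := 4) (b := 1/2)
    (by norm_num) (by norm_num) (by norm_num)
  have heq : ∫ x in Ioi (0:ℝ), x^(4:ℕ) * Real.exp (-x^2/2)
      = ∫ x in Ioi (0:ℝ), x^(4:ℝ) * Real.exp (-(1/2) * x^(2:ℝ)) := by
    refine setIntegral_congr_fun measurableSet_Ioi (fun x _ => ?_)
    rw [show (4:ℝ) = ((4:ℕ):ℝ) by norm_num, Real.rpow_natCast,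
      show (2:ℝ) = ((2:ℕ):ℝ) by norm_num, Real.rpow_natCast]
    ring_nf
  rw [heq, key, show (-(4+1)/2 : ℝ) = -(5/2) by norm_num, show ((4+1)/2 : ℝ) = 5/2 by norm_num,
    my_Gamma_five_halves]
  have h1 : ((1:ℝ)/2) ^ (-(5/2) : ℝ) = 2 ^ ((5:ℝ)/2) := by
    rw [Real.rpow_neg (by norm_num), one_div, Real.inv_rpow (by norm_num), inv_inv]
  have h2 : (2:ℝ) ^ ((5:ℝ)/2) = 4 * Real.sqrt 2 := by
    rw [show ((5:ℝ)/2) = ((2:ℕ):ℝ) + 1/2 by norm_num, Real.rpow_add (by norm_num),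
      Real.rpow_natCast, ← Real.sqrt_eq_rpow]
    norm_num
  rw [h1, h2, Real.sqrt_mul (by norm_num : (0:ℝ) ≤ 2)]
  ring

lemma my_moment4 : ∫ x, x^(4:ℕ) ∂(gaussianReal 0 1) = 3 := by
  rw [my_integral_gaussian]
  have h1 : ∀ x : ℝ, gaussianPDFReal 0 1 x * x^4
      = (Real.sqrt (2*π))⁻¹ * (x^4 * Real.exp (-x^2/2)) := by
    intro x; rw [my_pdf_eq]; ring
  simp_rw [h1]
  rw [integral_const_mul]
  have h2 : (∫ x : ℝ, x^4 * Real.exp (-x^2/2))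
      = ∫ x : ℝ, (fun y : ℝ => y^4 * Real.exp (-y^2/2)) |x| := by
    congr 1; funext x
    simp only
    rw [show |x|^4 = x^4 by rw [show (4:ℕ) = 2*2 from rfl, pow_mul, sq_abs, ← pow_mul],
      sq_abs]
  rw [h2, integral_comp_abs (f := fun y : ℝ => y^4 * Real.exp (-y^2/2)), my_Ioi_integral]
  have h3 : Real.sqrt (2*π) ≠ 0 := ne_of_gt (Real.sqrt_pos.mpr (by positivity))
  field_simp


/-- With `x₁ ~ N(0,1)` and `z̄ ~ N(0, 1 + (b₂*)²)` independent, `y = x₁ b₁* + z̄`,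
`(b₁*)² + (b₂*)² = ‖θ*‖²`, `b₁* ≥ 0`, `t > 0`:
`E[x₁² tanh(t x₁ y)] ≤ E[x₁² tanh(t x₁² b₁*)]` and `E[x₁² tanh(t x₁ y)] ≤ 3 t b₁*`. -/
theorem second_coordinate_bound {d : ℕ} (θs : EuclideanSpace ℝ (Fin d))
    (b1 b2 t : ℝ) (hb : b1 ^ 2 + b2 ^ 2 = ‖θs‖ ^ 2) (hb1 : 0 ≤ b1) (ht : 0 < t) :
    (∫ p : ℝ × ℝ, p.1 ^ 2 * Real.tanh (t * p.1 * (p.1 * b1 + p.2))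
        ∂((gaussianReal 0 1).prod (gaussianReal 0 (Real.toNNReal (1 + b2 ^ 2)))))
      ≤ (∫ p : ℝ × ℝ, p.1 ^ 2 * Real.tanh (t * p.1 ^ 2 * b1)
        ∂((gaussianReal 0 1).prod (gaussianReal 0 (Real.toNNReal (1 + b2 ^ 2))))) ∧
    (∫ p : ℝ × ℝ, p.1 ^ 2 * Real.tanh (t * p.1 * (p.1 * b1 + p.2))
        ∂((gaussianReal 0 1).prod (gaussianReal 0 (Real.toNNReal (1 + b2 ^ 2)))))
      ≤ 3 * t * b1 := by
  set v : ℝ≥0 := Real.toNNReal (1 + b2 ^ 2) with hv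
  set μ : Measure ℝ := gaussianReal 0 1 with hμ
  set ν : Measure ℝ := gaussianReal 0 v with hνdef
  -- integrability of x² and x⁴ under μ
  have hsq : Integrable (fun x : ℝ => x ^ 2) μ :=
    my_integrable_pow_gaussian 4 (by norm_num) (fun x => sq_nonneg x) my_sq_exp_bound
  have h4 : Integrable (fun x : ℝ => x ^ 4) μ :=
    my_integrable_pow_gaussian 64 (by norm_num) (fun x => by positivity) my_pow4_exp_bound
  -- integrability of p.1² under the product
  have hprodsq : Integrable (fun p : ℝ × ℝ => p.1 ^ 2) (μ.prod ν) := by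
    have h1 : Integrable (fun x : ℝ => x ^ 2) ((μ.prod ν).fst) := by
      rwa [MeasureTheory.Measure.fst_prod]
    rw [MeasureTheory.Measure.fst] at h1
    exact (integrable_map_measure
      (by exact (continuous_pow 2).aestronglyMeasurable)
      measurable_fst.aemeasurable).mp h1
  -- measurability and integrability of the two integrands
  have hm1 : AEStronglyMeasurable
      (fun p : ℝ × ℝ => p.1 ^ 2 * Real.tanh (t * p.1 * (p.1 * b1 + p.2))) (μ.prod ν) := by
    refine Continuous.aestronglyMeasurable ?_
    exact ((continuous_fst.pow 2).mul (my_continuous_tanh.comp (by fun_prop)))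
  have hm2 : AEStronglyMeasurable
      (fun p : ℝ × ℝ => p.1 ^ 2 * Real.tanh (t * p.1 ^ 2 * b1)) (μ.prod ν) := by
    refine Continuous.aestronglyMeasurable ?_
    exact ((continuous_fst.pow 2).mul (my_continuous_tanh.comp (by fun_prop)))
  have hbd : ∀ (y : ℝ) (x : ℝ), ‖x ^ 2 * Real.tanh y‖ ≤ x ^ 2 := by
    intro y x
    rw [Real.norm_eq_abs, abs_mul, abs_of_nonneg (sq_nonneg x)]
    calc x ^ 2 * |Real.tanh y| ≤ x ^ 2 * 1 :=
          mul_le_mul_of_nonneg_left (my_abs_tanh_le y) (sq_nonneg x)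
      _ = x ^ 2 := mul_one _
  have hF1 : Integrable
      (fun p : ℝ × ℝ => p.1 ^ 2 * Real.tanh (t * p.1 * (p.1 * b1 + p.2))) (μ.prod ν) :=
    hprodsq.mono' hm1 (ae_of_all _ fun p => hbd _ p.1)
  have hF2 : Integrable
      (fun p : ℝ × ℝ => p.1 ^ 2 * Real.tanh (t * p.1 ^ 2 * b1)) (μ.prod ν) :=
    hprodsq.mono' hm2 (ae_of_all _ fun p => hbd _ p.1)
  -- first inequality
  have key1 : (∫ p : ℝ × ℝ, p.1 ^ 2 * Real.tanh (t * p.1 * (p.1 * b1 + p.2)) ∂(μ.prod ν))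
      ≤ ∫ p : ℝ × ℝ, p.1 ^ 2 * Real.tanh (t * p.1 ^ 2 * b1) ∂(μ.prod ν) := by
    rw [integral_prod _ hF1, integral_prod _ hF2]
    refine integral_mono hF1.integral_prod_left hF2.integral_prod_left fun x => ?_
    have ha : 0 ≤ t * x ^ 2 * b1 := by positivity
    have harg : ∀ z : ℝ, t * x * (x * b1 + z) = t * x ^ 2 * b1 + (t * x) * z :=
      fun z => by ring
    simp_rw [harg]
    rw [integral_const_mul, integral_const]
    simp only [probReal_univ, one_smul]
    exact mul_le_mul_of_nonneg_left (my_cond_bound _ (t * x) ha) (sq_nonneg x)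
  refine ⟨key1, key1.trans ?_⟩
  -- second inequality
  have hg2 : Integrable (fun x : ℝ => x ^ 2 * Real.tanh (t * x ^ 2 * b1)) μ :=
    hsq.mono' (Continuous.aestronglyMeasurable (by
      exact (continuous_pow 2).mul (my_continuous_tanh.comp (by fun_prop))))
      (ae_of_all _ fun x => hbd _ x)
  have hred : (∫ p : ℝ × ℝ, p.1 ^ 2 * Real.tanh (t * p.1 ^ 2 * b1) ∂(μ.prod ν))
      = ∫ x : ℝ, x ^ 2 * Real.tanh (t * x ^ 2 * b1) ∂μ := by
    rw [integral_prod _ hF2]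
    congr 1; funext x
    simp [integral_const, measure_univ]
  rw [hred]
  have step : (∫ x : ℝ, x ^ 2 * Real.tanh (t * x ^ 2 * b1) ∂μ)
      ≤ ∫ x : ℝ, (t * b1) * x ^ 4 ∂μ := by
    refine integral_mono hg2 (h4.const_mul _) fun x => ?_
    have hu : 0 ≤ t * x ^ 2 * b1 := by positivity
    calc x ^ 2 * Real.tanh (t * x ^ 2 * b1) ≤ x ^ 2 * (t * x ^ 2 * b1) :=
          mul_le_mul_of_nonneg_left (my_tanh_le_self hu) (sq_nonneg x)
      _ = (t * b1) * x ^ 4 := by ring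
  refine step.trans ?_
  rw [integral_const_mul, hμ, my_moment4]
  nlinarith
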